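/- Let f ∈ F[x, y] with deg_y f ≤ q − 1 and deg_{q,q+1}(f) ≤ m, let r be a function from the points of the Hermitian curve to F, and let E = { P on the curve : r(P) ≠ f(P) }. Assume 2·|E| < q³ − m − g. Let R ∈ F[x, y] satisfy R(P) = r(P) for every curve point P, and let Λ ∈ F[x, y] be the unique nonzero polynomial with deg_y Λ ≤ q − 1 vanishing at every point of E, of minimal weighted degree among all such polynomials, and with leading coefficient 1. Then for any polynomials λ, ψ ∈ F[x, y] with deg_y λ ≤ q − 1, deg_y ψ ≤ q − 1, λ ≠ 0, deg_{q,q+1}(λ) ≤ deg_{q,q+1}(Λ), deg_{q,q+1}(ψ) ≤ deg_{q,q+1}(λ) + m, and λ·R − ψ lying in the ideal of F[x, y] generated by x^{q²} − x and y^q + y − x^{q+1}, there exists a nonzero γ ∈ F with λ = γ·Λ. -/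

import Mathlib

open MvPolynomial Finset

namespace HermAux

noncomputable section
variable {F : Type} [Field F]

/-- the (q, q+1) weight of an exponent vector -/
def W (q : ℕ) (d : Fin 2 →₀ ℕ) : ℕ := q * d 0 + (q+1) * d 1

lemma weight_eq (q : ℕ) (d : Fin 2 →₀ ℕ) : (Finsupp.weight ![q, q+1] d) = W q d := by
  rw [Finsupp.weight_apply, Finsupp.sum_fintype _ _ (by intro i; simp)]
  simp [Fin.sum_univ_two, W, Matrix.cons_val_zero, Matrix.cons_val_one, smul_eq_mul]
  ring

lemma wdeg_eq (q : ℕ) (p : MvPolynomial (Fin 2) F) :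
    weightedTotalDegree ![q, q+1] p = p.support.sup (W q) := by
  unfold weightedTotalDegree
  exact Finset.sup_congr rfl (fun d _ => weight_eq q d)

lemma W_add (q : ℕ) (d e : Fin 2 →₀ ℕ) : W q (d + e) = W q d + W q e := by
  simp [W]; ring

/-- decomposition of an exponent vector -/
def e2 (i j : ℕ) : Fin 2 →₀ ℕ := Finsupp.single 0 i + Finsupp.single 1 j

@[simp] lemma e2_app0 (i j : ℕ) : e2 i j 0 = i := by simp [e2]
@[simp] lemma e2_app1 (i j : ℕ) : e2 i j 1 = j := by simp [e2]

lemma e2_eta (d : Fin 2 →₀ ℕ) : e2 (d 0) (d 1) = d := by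
  ext a; fin_cases a <;> simp [e2]

@[simp] lemma W_e2 (q i j : ℕ) : W q (e2 i j) = q * i + (q+1) * j := by simp [W]

lemma e2_add (i j i' j' : ℕ) : e2 i j + e2 i' j' = e2 (i+i') (j+j') := by
  ext a; fin_cases a <;> simp [e2]

lemma e2_inj {q i j i' j' : ℕ} (hq : 2 ≤ q) (hj : j < q) (hj' : j' < q)
    (h : q * i + (q+1) * j = q * i' + (q+1) * j') : i = i' ∧ j = j' := by
  have h1 : j + (i + j) * q = j' + (i' + j') * q := by
    have e1 : j + (i + j) * q = q * i + (q+1) * j := by ring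
    have e1' : j' + (i' + j') * q = q * i' + (q+1) * j' := by ring
    rw [e1, e1', h]
  have h2 := congrArg (· % q) h1
  simp only [Nat.add_mul_mod_self_right] at h2
  have hj2 : j = j' := by rwa [Nat.mod_eq_of_lt hj, Nat.mod_eq_of_lt hj'] at h2
  subst hj2
  constructor
  · have := Nat.eq_of_mul_eq_mul_left (by omega : 0 < q) (by omega : q * i = q * i')
    exact this
  · rfl


section Split
variable (q : ℕ)

/-- the part of `h` with `y`-exponents `< q` -/
def Apart (h : MvPolynomial (Fin 2) F) : MvPolynomial (Fin 2) F :=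
  ∑ d ∈ h.support.filter (fun d => ¬ q ≤ d 1), monomial d (h.coeff d)

/-- the quotient upon division of `h` by `y^q` -/
def Bpart (h : MvPolynomial (Fin 2) F) : MvPolynomial (Fin 2) F :=
  ∑ d ∈ h.support.filter (fun d => q ≤ d 1), monomial (d - Finsupp.single 1 q) (h.coeff d)

lemma coeff_Apart (h : MvPolynomial (Fin 2) F) (e : Fin 2 →₀ ℕ) :
    (Apart q h).coeff e = if e 1 < q then h.coeff e else 0 := by
  rw [Apart, coeff_sum]
  simp only [coeff_monomial]
  rw [Finset.sum_ite_eq' (h.support.filter (fun d => ¬ q ≤ d 1)) e (fun d => h.coeff d)]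
  by_cases h1 : e 1 < q
  · by_cases h2 : e ∈ h.support
    · simp [h1, h2, Finset.mem_filter, Nat.not_le.mpr h1]
    · have hz : h.coeff e = 0 := by simpa using h2
      simp [Finset.mem_filter, h2, h1, hz]
  · simp only [Finset.mem_filter, if_neg h1]
    have : ¬ (e ∈ h.support ∧ ¬ q ≤ e 1) := by push_neg; intro _; omega
    rw [if_neg this]

lemma coeff_Bpart (h : MvPolynomial (Fin 2) F) (e : Fin 2 →₀ ℕ) :
    (Bpart q h).coeff e = h.coeff (e + Finsupp.single 1 q) := by
  rw [Bpart, coeff_sum]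
  simp only [coeff_monomial]
  rw [Finset.sum_eq_single (e + Finsupp.single 1 q)]
  · rw [if_pos]; exact add_tsub_cancel_right e (Finsupp.single 1 q)
  · intro d hd hne
    rw [Finset.mem_filter] at hd
    rw [if_neg]
    intro heq
    exact hne (by rw [← heq, tsub_add_cancel_of_le (Finsupp.single_le_iff.mpr hd.2)])
  · intro hnot
    rw [if_pos (add_tsub_cancel_right e (Finsupp.single 1 q))]
    by_contra hc
    exact hnot (Finset.mem_filter.mpr ⟨mem_support_iff.mpr hc, by simp⟩)

lemma split_eq (h : MvPolynomial (Fin 2) F) : Apart q h + X 1 ^ q * Bpart q h = h := by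
  rw [Apart, Bpart, Finset.mul_sum]
  have : ∀ d ∈ h.support.filter (fun d => q ≤ d 1),
      (X 1 ^ q : MvPolynomial (Fin 2) F) * monomial (d - Finsupp.single 1 q) (h.coeff d)
        = monomial d (h.coeff d) := by
    intro d hd
    rw [Finset.mem_filter] at hd
    rw [X_pow_eq_monomial, monomial_mul, one_mul,
      add_tsub_cancel_of_le (Finsupp.single_le_iff.mpr hd.2)]
  rw [Finset.sum_congr rfl this, add_comm, Finset.sum_filter_add_sum_filter_not]
  exact support_sum_monomial_coeff h

/-- the Hermitian curve polynomial -/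
def Fy : MvPolynomial (Fin 2) F := X 1 ^ q + X 1 - X 0 ^ (q+1)

/-- one-step reduction of `h` modulo the curve polynomial -/
def R1 (h : MvPolynomial (Fin 2) F) : MvPolynomial (Fin 2) F :=
  Apart q h + (X 0 ^ (q+1) - X 1) * Bpart q h

lemma R1_sub (h : MvPolynomial (Fin 2) F) : h - R1 q h = Fy q * Bpart q h := by
  rw [R1, Fy]
  linear_combination -split_eq q h

lemma supp_Apart (h : MvPolynomial (Fin 2) F) {d : Fin 2 →₀ ℕ} (hd : d ∈ (Apart q h).support) :
    d ∈ h.support ∧ d 1 < q := by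
  rw [mem_support_iff, coeff_Apart] at hd
  by_cases h1 : d 1 < q
  · rw [if_pos h1] at hd; exact ⟨mem_support_iff.mpr hd, h1⟩
  · rw [if_neg h1] at hd; exact absurd rfl hd

lemma supp_Bpart (h : MvPolynomial (Fin 2) F) {d : Fin 2 →₀ ℕ} (hd : d ∈ (Bpart q h).support) :
    (d + Finsupp.single 1 q) ∈ h.support := by
  rw [mem_support_iff, coeff_Bpart] at hd
  exact mem_support_iff.mpr hd

lemma supp_mul_monomial (u : Fin 2 →₀ ℕ) (c : F) (p : MvPolynomial (Fin 2) F)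
    {d : Fin 2 →₀ ℕ} (hd : d ∈ (monomial u c * p).support) : ∃ e ∈ p.support, d = u + e := by
  have := MvPolynomial.support_mul (monomial u c) p hd
  rw [Finset.mem_add] at this
  obtain ⟨b, hb, e, he, hbe⟩ := this
  have hbu : b = u := Finset.mem_singleton.mp (support_monomial_subset hb)
  exact ⟨e, he, by rw [← hbe, hbu]⟩

lemma W_single1q : W q (Finsupp.single 1 q) = (q+1) * q := by simp [W]

lemma supp_R1 {h : MvPolynomial (Fin 2) F} {d : Fin 2 →₀ ℕ} (hd : d ∈ (R1 q h).support) :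
    d ∈ (Apart q h).support ∨
    (∃ e ∈ (Bpart q h).support, d = Finsupp.single 0 (q+1) + e) ∨
    (∃ e ∈ (Bpart q h).support, d = Finsupp.single 1 1 + e) := by
  rw [R1] at hd
  rcases Finset.mem_union.mp (support_add hd) with h1 | h2
  · exact Or.inl h1
  · rw [sub_mul] at h2
    rcases Finset.mem_union.mp (MvPolynomial.support_sub _ _ _ h2) with h3 | h4
    · rw [X_pow_eq_monomial] at h3
      obtain ⟨e, he, rfl⟩ := supp_mul_monomial _ _ _ h3
      exact Or.inr (Or.inl ⟨e, he, rfl⟩)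
    · rw [show (X 1 : MvPolynomial (Fin 2) F) = monomial (Finsupp.single 1 1) 1 by
        rw [← X_pow_eq_monomial, pow_one]] at h4
      obtain ⟨e, he, rfl⟩ := supp_mul_monomial _ _ _ h4
      exact Or.inr (Or.inr ⟨e, he, rfl⟩)

lemma wdeg_R1_le (hq : 1 ≤ q) (h : MvPolynomial (Fin 2) F) {d : Fin 2 →₀ ℕ}
    (hd : d ∈ (R1 q h).support) : W q d ≤ h.support.sup (W q) := by
  rcases supp_R1 q hd with h1 | ⟨e, he, rfl⟩ | ⟨e, he, rfl⟩
  · exact Finset.le_sup (supp_Apart q h h1).1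
  · have hB := Finset.le_sup (f := W q) (supp_Bpart q h he)
    rw [W_add, W_single1q] at hB
    have hw : W q (Finsupp.single 0 (q+1) + e) = q * (q+1) + W q e := by
      rw [W_add]; simp [W]
    have hc : (q+1)*q = q*(q+1) := by ring
    omega
  · have hB := Finset.le_sup (f := W q) (supp_Bpart q h he)
    rw [W_add, W_single1q] at hB
    have hw : W q (Finsupp.single 1 1 + e) = (q+1) + W q e := by
      rw [W_add]; simp [W]
    have hc : q + 1 ≤ (q+1) * q := by nlinarith
    omega

lemma degY_R1 (hq : 2 ≤ q) (h : MvPolynomial (Fin 2) F)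
    (hh : ∀ d ∈ h.support, d 1 ≤ 2*q - 2) {d : Fin 2 →₀ ℕ}
    (hd : d ∈ (R1 q h).support) : d 1 ≤ q - 1 := by
  rcases supp_R1 q hd with h1 | ⟨e, he, rfl⟩ | ⟨e, he, rfl⟩
  · have := (supp_Apart q h h1).2; omega
  · have hB := hh _ (supp_Bpart q h he)
    simp only [Finsupp.add_apply, Finsupp.single_apply] at hB ⊢
    simp at hB ⊢; omega
  · have hB := hh _ (supp_Bpart q h he)
    simp only [Finsupp.add_apply, Finsupp.single_apply] at hB ⊢
    simp at hB ⊢; omega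

end Split

section Helpers
variable (q : ℕ)

lemma eval_monomial₂ (α β : F) (d : Fin 2 →₀ ℕ) (c : F) :
    eval ![α, β] (monomial d c) = c * α ^ (d 0) * β ^ (d 1) := by
  rw [eval_monomial]
  rw [Finsupp.prod_fintype _ _ (fun i => pow_zero _)]
  rw [Fin.prod_univ_two]
  simp [mul_assoc]

/-- measure for the well-founded reduction -/
def mes (d : Fin 2 →₀ ℕ) : ℕ := W q d * W q d + W q d + d 1

lemma d1_le_W (d : Fin 2 →₀ ℕ) : d 1 ≤ W q d := by
  have : d 1 ≤ (q+1) * d 1 := Nat.le_mul_of_pos_left _ (by omega)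
  simp only [W]; omega

lemma mes_lt_of_W_lt {d e : Fin 2 →₀ ℕ} (h : W q d < W q e) : mes q d < mes q e := by
  have h1 := d1_le_W q d
  have h2 := d1_le_W q e
  simp only [mes]
  nlinarith

lemma mes_lt_of_W_eq {d e : Fin 2 →₀ ℕ} (h : W q d = W q e) (hj : d 1 < e 1) :
    mes q d < mes q e := by simp only [mes, h]; omega

lemma mon_mul_Fy (e : Fin 2 →₀ ℕ) (c : F) :
    monomial e c * Fy q = monomial (e + Finsupp.single 1 q) c
      + monomial (e + Finsupp.single 1 1) c - monomial (e + Finsupp.single 0 (q+1)) c := by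
  have h1 : (X 1 : MvPolynomial (Fin 2) F) = monomial (Finsupp.single 1 1) 1 := by
    rw [← X_pow_eq_monomial, pow_one]
  rw [Fy, mul_sub, mul_add, X_pow_eq_monomial, X_pow_eq_monomial, h1]
  simp [monomial_mul]

lemma sub_lead {g : MvPolynomial (Fin 2) F} {e₀ : Fin 2 →₀ ℕ}
    (hmax : ∀ d ∈ g.support, W q d ≤ W q e₀)
    (huniq : ∀ d ∈ g.support, W q d = W q e₀ → d = e₀)
    (hc : g.coeff e₀ ≠ 0) (u : Fin 2 →₀ ℕ) (c : F) :
    ∀ d ∈ (monomial u (c * (g.coeff e₀)⁻¹) * g - monomial (u + e₀) c).support,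
      W q d < W q u + W q e₀ := by
  intro d hd
  set r := monomial u (c * (g.coeff e₀)⁻¹) * g - monomial (u + e₀) c with hr
  have hcoeff : r.coeff (u + e₀) = 0 := by
    rw [hr, coeff_sub, coeff_monomial_mul, coeff_monomial, if_pos rfl]
    field_simp
    ring
  have hdne : d ≠ u + e₀ := by
    intro heq; rw [heq] at hd; exact (mem_support_iff.mp hd) hcoeff
  rcases Finset.mem_union.mp (MvPolynomial.support_sub _ _ _ hd) with h1 | h2
  · obtain ⟨e, he, rfl⟩ := supp_mul_monomial _ _ _ h1
    rw [W_add]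
    have := hmax e he
    rcases lt_or_eq_of_le this with hlt | heq
    · omega
    · exact absurd (by rw [huniq e he heq]) hdne
  · exact absurd (Finset.mem_singleton.mp (support_monomial_subset h2)) hdne

lemma interpolate (Z : Finset (F × F)) (g : F × F → F) :
    ∃ h : MvPolynomial (Fin 2) F, ∀ P ∈ Z, eval ![P.1, P.2] h = g P := by
  classical
  use ∑ P ∈ Z, C (g P) * ∏ Q ∈ Z.erase P,
    (if Q.1 ≠ P.1 then C (P.1 - Q.1)⁻¹ * (X 0 - C Q.1) else C (P.2 - Q.2)⁻¹ * (X 1 - C Q.2))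
  intro P hP
  rw [map_sum]
  rw [Finset.sum_eq_single P]
  · rw [map_mul, map_prod, eval_C]
    have : ∀ Q ∈ Z.erase P, eval ![P.1, P.2]
        (if Q.1 ≠ P.1 then C (P.1 - Q.1)⁻¹ * (X 0 - C Q.1)
         else C (P.2 - Q.2)⁻¹ * (X 1 - C Q.2)) = 1 := by
      intro Q hQ
      have hQP : Q ≠ P := Finset.ne_of_mem_erase hQ
      by_cases hx : Q.1 ≠ P.1
      · rw [if_pos hx]; simp only [map_mul, eval_C, map_sub, eval_X]
        simp only [Matrix.cons_val_zero]
        rw [inv_mul_cancel₀ (sub_ne_zero.mpr (Ne.symm hx))]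
      · rw [if_neg hx]; push_neg at hx
        have hy : Q.2 ≠ P.2 := fun h2 => hQP (Prod.ext hx h2)
        simp only [map_mul, eval_C, map_sub, eval_X, Matrix.cons_val_one, Matrix.head_cons,
          Matrix.cons_val_zero, Matrix.cons_val_fin_one]
        rw [inv_mul_cancel₀ (sub_ne_zero.mpr (Ne.symm hy))]
    rw [Finset.prod_congr rfl this, Finset.prod_const_one, mul_one]
  · intro P' hP' hne
    rw [map_mul, map_prod]
    have hPmem : P ∈ Z.erase P' := Finset.mem_erase.mpr ⟨hne.symm, hP⟩
    apply mul_eq_zero_of_right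
    apply Finset.prod_eq_zero hPmem
    by_cases hx : P.1 ≠ P'.1
    · rw [if_pos hx]; simp
    · rw [if_neg hx]; push_neg at hx; simp
  · intro h; exact absurd hP h

lemma card_le_of_surj_eval (Δ : Finset (ℕ × ℕ)) (Z : Finset (F × F))
    (hsurj : ∀ g : F × F → F, ∃ v : ℕ × ℕ → F,
      ∀ P ∈ Z, (∑ ij ∈ Δ, v ij * (P.1 ^ ij.1 * P.2 ^ ij.2)) = g P) :
    Z.card ≤ Δ.card := by
  classical
  let φ : ((↥Δ → F)) →ₗ[F] (↥Z → F) :=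
    { toFun := fun v => fun P => ∑ ij : ↥Δ,
        v ij * ((P : F × F).1 ^ (ij : ℕ × ℕ).1 * (P : F × F).2 ^ (ij : ℕ × ℕ).2)
      map_add' := by
        intro v w; funext P
        simp only [Pi.add_apply, add_mul, Finset.sum_add_distrib]
      map_smul' := by
        intro c v; funext P
        simp only [Pi.smul_apply, smul_eq_mul, RingHom.id_apply, Finset.mul_sum, mul_assoc] }
  have hφsurj : Function.Surjective φ := by
    intro g
    obtain ⟨v, hv⟩ := hsurj (fun P => if hP : P ∈ Z then g ⟨P, hP⟩ else 0)
    refine ⟨fun ij => v ij, ?_⟩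
    funext P
    have := hv P P.2
    simp only [P.2, dif_pos] at this
    rw [← this]
    show ∑ ij : ↥Δ, _ = _
    rw [← Finset.sum_attach Δ (fun ij => v ij * ((P : F × F).1 ^ ij.1 * (P : F × F).2 ^ ij.2))]
    rfl
  have h1 : Module.finrank F (↥Z → F) ≤ Module.finrank F (↥Δ → F) := by
    have := LinearMap.finrank_range_le φ
    rwa [LinearMap.range_eq_top.mpr hφsurj, finrank_top] at this
  simpa [Module.finrank_fintype_fun_eq_card] using h1

end Helpers

section ZeroBound
variable [Fintype F] [DecidableEq F]

lemma zero_bound {q : ℕ} (hq : 2 ≤ q) {μ : MvPolynomial (Fin 2) F} (hμ : μ ≠ 0)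
    (hy : ∀ d ∈ μ.support, d 1 ≤ q - 1) :
    (Finset.univ.filter (fun P : F × F => P.2 ^ q + P.2 = P.1 ^ (q+1) ∧
      eval ![P.1, P.2] μ = 0)).card ≤ μ.support.sup (W q) := by
  classical
  obtain ⟨dm, hdm, hWdm⟩ := Finset.exists_mem_eq_sup μ.support
      (MvPolynomial.support_nonempty.mpr hμ) (W q)
  set a := dm 0 with ha
  set b := dm 1 with hb
  have hbq : b < q := by have := hy dm hdm; omega
  have hc₀ : μ.coeff dm ≠ 0 := mem_support_iff.mp hdm
  set I : Ideal (MvPolynomial (Fin 2) F) := Ideal.span {Fy q, μ} with hI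
  have hμI : μ ∈ I := Ideal.subset_span (by simp)
  have hFyI : Fy q ∈ I := Ideal.subset_span (by simp)
  have hμmax : ∀ d ∈ μ.support, W q d ≤ W q dm := fun d hd => hWdm ▸ Finset.le_sup hd
  have hWdm_eq : W q dm = q * a + (q+1) * b := rfl
  have hμuniq : ∀ d ∈ μ.support, W q d = W q dm → d = dm := by
    intro d hd hW
    have hd1 : d 1 < q := by have := hy d hd; omega
    obtain ⟨h0, h1⟩ := e2_inj hq hd1 hbq (by
      show q * d 0 + (q+1) * d 1 = q * a + (q+1) * b
      exact hW)
    rw [← e2_eta d, h0, h1, ha, hb, e2_eta]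
  -- construction of the auxiliary polynomial ν
  have hν : 1 ≤ b → ∃ ν : MvPolynomial (Fin 2) F, ν ∈ I ∧
      (∀ d ∈ ν.support, W q d ≤ W q (e2 (a+q+1) 0)) ∧
      (∀ d ∈ ν.support, W q d = W q (e2 (a+q+1) 0) → d = e2 (a+q+1) 0) ∧
      ν.coeff (e2 (a+q+1) 0) = μ.coeff dm := by
    intro hb1
    set s := q - b with hs
    set h₀ := (monomial (Finsupp.single 1 s) (1:F)) * μ with hh₀
    refine ⟨R1 q h₀, ?_, ?_, ?_, ?_⟩
    · have hsub := R1_sub q h₀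
      have : R1 q h₀ = h₀ - Fy q * Bpart q h₀ := by
        rw [← hsub]; ring
      rw [this]
      exact Submodule.sub_mem _ (Ideal.mul_mem_left _ _ hμI) (Ideal.mul_mem_right _ _ hFyI)
    · intro d hd
      have hisup := wdeg_R1_le q (by omega) h₀ hd
      have hWgoal : W q (e2 (a+q+1) 0) = q*(a+q+1) := by simp [W_e2]
      rw [hWgoal]
      refine le_trans hisup (Finset.sup_le ?_)
      intro e he
      obtain ⟨e', he', rfl⟩ := supp_mul_monomial _ _ _ he
      rw [W_add]
      have hWs : W q (Finsupp.single 1 s) = (q+1) * s := by simp [W]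
      have hWe' := hμmax e' he'
      have h2 : (q+1)*s + (q+1)*b = (q+1)*q := by
        rw [← Nat.mul_add]; congr 1; omega
      have h3 : q*(a+q+1) = q*a + q*q + q := by ring
      have h4 : (q+1)*q = q*q + q := by ring
      rw [hWs]
      rw [hWdm_eq] at hWe'
      omega
    · intro d hd hW
      have hd1 : d 1 < q := by
        have := degY_R1 q hq h₀ (by
          intro e he
          obtain ⟨e', he', rfl⟩ := supp_mul_monomial _ _ _ he
          have := hy e' he'
          have h1 : (Finsupp.single (1 : Fin 2) s + e') 1 = s + e' 1 := by simp
          omega) hd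
        omega
      rw [W_e2] at hW
      obtain ⟨h0, h1⟩ := e2_inj hq hd1 (by omega : (0:ℕ) < q) hW
      rw [← e2_eta d, h0, h1]
    · -- coefficient computation
      have ht : e2 (a+q+1) 0 = Finsupp.single 0 (q+1) + e2 a 0 := by
        ext x; fin_cases x <;> simp [e2] <;> omega
      have hs1 : 1 ≤ s := by omega
      show (R1 q h₀).coeff (e2 (a+q+1) 0) = μ.coeff dm
      rw [R1, sub_mul, coeff_add, coeff_sub]
      have c1 : (Apart q h₀).coeff (e2 (a+q+1) 0) = 0 := by
        rw [coeff_Apart, if_pos (by simp [e2] ; omega)]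
        by_contra hc
        obtain ⟨e', he', heq⟩ := supp_mul_monomial _ _ _ (mem_support_iff.mpr hc)
        have := DFunLike.congr_fun heq 1
        simp [e2] at this
        omega
      have c2 : ((X 0 ^ (q+1) : MvPolynomial (Fin 2) F) * Bpart q h₀).coeff (e2 (a+q+1) 0)
          = μ.coeff dm := by
        rw [X_pow_eq_monomial, ht]
        rw [show MvPolynomial.coeff ((Finsupp.single 0 (q+1)) + e2 a 0)
          ((monomial (Finsupp.single 0 (q+1))) (1:F) * Bpart q h₀)
          = 1 * (Bpart q h₀).coeff (e2 a 0) from coeff_monomial_mul _ _ _ _, one_mul]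
        rw [coeff_Bpart]
        have he2 : e2 a 0 + Finsupp.single 1 q = Finsupp.single 1 s + e2 a b := by
          ext x; fin_cases x <;> simp [e2] <;> omega
        rw [he2, hh₀]
        rw [show MvPolynomial.coeff ((Finsupp.single 1 s) + e2 a b)
          ((monomial (Finsupp.single 1 s)) (1:F) * μ)
          = 1 * μ.coeff (e2 a b) from coeff_monomial_mul _ _ _ _, one_mul]
        rw [ha, hb, e2_eta]
      have c3 : ((X 1 : MvPolynomial (Fin 2) F) * Bpart q h₀).coeff (e2 (a+q+1) 0) = 0 := by
        rw [show (X 1 : MvPolynomial (Fin 2) F) = monomial (Finsupp.single 1 1) 1 by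
          rw [← X_pow_eq_monomial, pow_one]]
        rw [coeff_monomial_mul', if_neg]
        rw [Finsupp.single_le_iff]
        simp [e2]
      rw [c1, c2, c3]
      ring
  -- the footprint
  set Δ : Finset (ℕ × ℕ) :=
    ((Finset.range (a+q+1)) ×ˢ (Finset.range b)) ∪ ((Finset.range a) ×ˢ (Finset.Ico b q)) with hΔdef
  set SΔ : Submodule F (MvPolynomial (Fin 2) F) :=
    Submodule.span F ((fun ij : ℕ × ℕ => (monomial (e2 ij.1 ij.2) (1:F))) '' ↑Δ) with hSΔ
  set M : Submodule F (MvPolynomial (Fin 2) F) := SΔ ⊔ (Submodule.restrictScalars F I) with hM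
  have hIM : ∀ x ∈ I, x ∈ M := fun x hx =>
    Submodule.mem_sup_right ((Submodule.restrictScalars_mem F I x).mpr hx)
  have hΔmem : ∀ i j : ℕ, ((j < b ∧ i < a+q+1) ∨ (b ≤ j ∧ j < q ∧ i < a)) → (i, j) ∈ Δ := by
    intro i j hij
    rw [hΔdef, Finset.mem_union, Finset.mem_product, Finset.mem_product,
      Finset.mem_range, Finset.mem_range, Finset.mem_range, Finset.mem_Ico]
    rcases hij with ⟨h1, h2⟩ | ⟨h1, h2, h3⟩
    · exact Or.inl ⟨h2, h1⟩
    · exact Or.inr ⟨h3, h1, h2⟩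
  have main : ∀ N (h' : MvPolynomial (Fin 2) F),
      (∀ d ∈ h'.support, mes q d < N) → h' ∈ M := by
    intro N
    induction N using Nat.strong_induction_on with
    | _ N IH =>
    intro h' hh'
    rw [← support_sum_monomial_coeff h']
    refine Submodule.sum_mem M ?_
    intro d hd
    have hmes := hh' d hd
    set c := h'.coeff d with hc
    clear_value c
    clear hc hd hh'
    by_cases hdq : q ≤ d 1
    · -- reduce by the curve polynomial
      obtain ⟨j', hj'⟩ : ∃ j', d 1 = j' + q := ⟨d 1 - q, by omega⟩
      set i := d 0 with hi
      have hd_eq : d = e2 i (j' + q) := by rw [← hj', hi]; exact (e2_eta d).symm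
      have h1 : e2 i j' + Finsupp.single 1 q = e2 i (j'+q) := by
        ext x; fin_cases x <;> simp [e2]
      have h2 : e2 i j' + Finsupp.single 1 1 = e2 i (j'+1) := by
        ext x; fin_cases x <;> simp [e2]
      have h3 : e2 i j' + Finsupp.single 0 (q+1) = e2 (i+(q+1)) j' := by
        ext x; fin_cases x <;> simp [e2] <;> omega
      have key : monomial d c = monomial (e2 i j') c * Fy q
          + (monomial (e2 (i+(q+1)) j') c - monomial (e2 i (j'+1)) c) := by
        rw [mon_mul_Fy, h1, h2, h3, hd_eq]; ring
      rw [key]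
      refine Submodule.add_mem M (hIM _ (Ideal.mul_mem_left _ _ hFyI)) ?_
      refine IH (mes q d) hmes _ ?_
      intro d' hd'
      rcases Finset.mem_union.mp (MvPolynomial.support_sub _ _ _ hd') with hA | hB
      · have : d' = e2 (i+(q+1)) j' := Finset.mem_singleton.mp (support_monomial_subset hA)
        subst this
        refine mes_lt_of_W_eq q ?_ ?_
        · rw [hd_eq]; simp [W_e2]; ring
        · rw [hd_eq]; simp [e2]; omega
      · have : d' = e2 i (j'+1) := Finset.mem_singleton.mp (support_monomial_subset hB)
        subst this
        refine mes_lt_of_W_lt q ?_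
        rw [hd_eq]; simp only [W_e2]
        have : (q+1) * (j'+1) < (q+1) * (j'+q) := by nlinarith
        omega
    · -- y-degree < q
      push_neg at hdq
      by_cases hΔc : (d 1 < b ∧ d 0 < a+q+1) ∨ (b ≤ d 1 ∧ d 0 < a)
      · -- inside the footprint
        have hdΔ : (d 0, d 1) ∈ Δ := by
          apply hΔmem
          rcases hΔc with ⟨u1, u2⟩ | ⟨u1, u2⟩
          · exact Or.inl ⟨u1, u2⟩
          · exact Or.inr ⟨u1, hdq, u2⟩
        apply Submodule.mem_sup_left
        have : monomial d c = c • monomial d (1:F) := by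
          rw [smul_monomial, smul_eq_mul, mul_one]
        rw [this]
        apply Submodule.smul_mem
        apply Submodule.subset_span
        refine ⟨(d 0, d 1), hdΔ, ?_⟩
        show (monomial (e2 (d 0) (d 1))) (1:F) = monomial d 1
        rw [e2_eta]
      · push_neg at hΔc
        rcases Nat.lt_or_ge (d 1) b with hjb | hjb
        · -- use ν
          have hge : a + q + 1 ≤ d 0 := hΔc.1 hjb
          obtain ⟨ν, hνI, hνmax, hνuniq, hνc⟩ := hν (by omega)
          set e₀ := e2 (a+q+1) 0 with he₀
          set u := e2 (d 0 - (a+q+1)) (d 1) with hu_def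
          have hu : u + e₀ = d := by
            rw [hu_def, he₀, e2_add]
            rw [show d 0 - (a+q+1) + (a+q+1) = d 0 by omega, Nat.add_zero, e2_eta]
          have hcν : ν.coeff e₀ ≠ 0 := by rw [hνc]; exact hc₀
          have hr := sub_lead q hνmax hνuniq hcν u c
          have hkey : monomial d c = monomial u (c * (ν.coeff e₀)⁻¹) * ν -
              (monomial u (c * (ν.coeff e₀)⁻¹) * ν - monomial (u + e₀) c) := by
            rw [sub_sub_cancel, hu]
          rw [hkey]
          refine Submodule.sub_mem M (hIM _ (Ideal.mul_mem_left _ _ hνI)) ?_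
          refine IH (mes q d) hmes _ ?_
          intro d' hd'
          have := hr d' hd'
          refine mes_lt_of_W_lt q ?_
          rw [← W_add, hu] at this
          exact this
        · -- use μ
          have hge : a ≤ d 0 := hΔc.2 hjb
          set u := e2 (d 0 - a) (d 1 - b) with hu_def
          have hu : u + dm = d := by
            conv_lhs => rw [← e2_eta dm]
            rw [hu_def, e2_add, ← ha, ← hb]
            rw [show d 0 - a + a = d 0 by omega, show d 1 - b + b = d 1 by omega, e2_eta]
          have hr := sub_lead q hμmax hμuniq hc₀ u c
          have hkey : monomial d c = monomial u (c * (μ.coeff dm)⁻¹) * μ -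
              (monomial u (c * (μ.coeff dm)⁻¹) * μ - monomial (u + dm) c) := by
            rw [sub_sub_cancel, hu]
          rw [hkey]
          refine Submodule.sub_mem M (hIM _ (Ideal.mul_mem_left _ _ hμI)) ?_
          refine IH (mes q d) hmes _ ?_
          intro d' hd'
          have := hr d' hd'
          refine mes_lt_of_W_lt q ?_
          rw [← W_add, hu] at this
          exact this
  have hall : ∀ h' : MvPolynomial (Fin 2) F, h' ∈ M :=
    fun h' => main (h'.support.sup (mes q) + 1) h'
      (fun d hd => Nat.lt_succ_of_le (Finset.le_sup hd))
  -- apply the rank bound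
  set Z := Finset.univ.filter (fun P : F × F => P.2 ^ q + P.2 = P.1 ^ (q+1) ∧
      eval ![P.1, P.2] μ = 0) with hZ
  have hcard : Z.card ≤ Δ.card := by
    apply card_le_of_surj_eval
    intro g
    obtain ⟨h, hint⟩ := interpolate Z g
    have hM' := hall h
    rw [hM, Submodule.mem_sup] at hM'
    obtain ⟨y, hy', z, hz, hyz⟩ := hM'
    rw [hSΔ] at hy'
    rw [show ((fun ij : ℕ × ℕ => (monomial (e2 ij.1 ij.2) (1:F))) '' ↑Δ)
      = ↑(Δ.image (fun ij : ℕ × ℕ => (monomial (e2 ij.1 ij.2) (1:F)))) from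
      (Finset.coe_image).symm] at hy'
    obtain ⟨vf, -, hvf⟩ := Submodule.mem_span_finset.mp hy'
    refine ⟨fun ij => vf (monomial (e2 ij.1 ij.2) 1), ?_⟩
    intro P hP
    have hinj : ∀ ij ∈ Δ, ∀ ij' ∈ Δ,
        (monomial (e2 ij.1 ij.2) (1:F)) = monomial (e2 ij'.1 ij'.2) 1 → ij = ij' := by
      intro ij _ ij' _ heq
      rw [monomial_eq_monomial_iff] at heq
      rcases heq with ⟨he, -⟩ | ⟨h1, -⟩
      · have h0 := DFunLike.congr_fun he 0
        have h1 := DFunLike.congr_fun he 1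
        simp only [e2_app0, e2_app1] at h0 h1
        exact Prod.ext h0 h1
      · exact absurd h1 one_ne_zero
    have hsum : y = ∑ ij ∈ Δ, vf (monomial (e2 ij.1 ij.2) 1) • monomial (e2 ij.1 ij.2) (1:F) := by
      rw [← hvf, Finset.sum_image hinj]
    have hcurve : P.2 ^ q + P.2 = P.1 ^ (q+1) ∧ eval ![P.1, P.2] μ = 0 := by
      have := Finset.mem_filter.mp hP
      exact this.2
    have hzeval : eval ![P.1, P.2] z = 0 := by
      rw [hI] at hz
      obtain ⟨u1, u2, huv⟩ := Ideal.mem_span_pair.mp hz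
      rw [← huv, map_add, map_mul, map_mul]
      have hFy0 : eval ![P.1, P.2] (Fy q) = 0 := by
        rw [Fy]
        simp only [map_sub, map_add, map_pow, eval_X]
        simp only [Matrix.cons_val_zero, Matrix.cons_val_one, Matrix.head_cons]
        rw [hcurve.1]; ring
      rw [hFy0, hcurve.2]; ring
    have : eval ![P.1, P.2] h = g P := hint P hP
    rw [← hyz, map_add, hzeval, add_zero, hsum, map_sum] at this
    rw [← this]
    apply Finset.sum_congr rfl
    intro ij _
    rw [smul_monomial, smul_eq_mul, mul_one, eval_monomial₂, e2_app0, e2_app1]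
    ring
  have hΔcard : Δ.card ≤ μ.support.sup (W q) := by
    rw [hWdm, hWdm_eq, hΔdef]
    rw [Finset.card_union_of_disjoint (by
      rw [Finset.disjoint_left]
      rintro ⟨i, j⟩ hij1 hij2
      rw [Finset.mem_product, Finset.mem_range, Finset.mem_range] at hij1
      rw [Finset.mem_product, Finset.mem_Ico] at hij2
      omega)]
    rw [Finset.card_product, Finset.card_product, Finset.card_range, Finset.card_range,
      Finset.card_range, Nat.card_Ico]
    obtain ⟨t, ht⟩ : ∃ t, q = b + t := ⟨q - b, by omega⟩
    subst ht
    rw [Nat.add_sub_cancel_left]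
    ring_nf
    omega
  exact le_trans hcard hΔcard

end ZeroBound

section Curve
variable [Fintype F] [DecidableEq F]

lemma charp_of_card {p n q : ℕ} (hp : p.Prime) (hn : 0 < n) (hq : q = p ^ n)
    (hF : Fintype.card F = q ^ 2) : CharP F p := by
  have h1 : CharP F (ringChar F) := ringChar.charP F
  obtain ⟨n', hprime, hcard⟩ := FiniteField.card F (ringChar F)
  have heq : (ringChar F) ^ (n' : ℕ) = p ^ (2*n) := by
    rw [← hcard, hF, hq, ← pow_mul, mul_comm]
  have hdvd : ringChar F ∣ p ^ (2*n) := heq ▸ dvd_pow_self _ (by positivity)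
  have : ringChar F = p := (Nat.prime_dvd_prime_iff_eq hprime hp).mp (hprime.dvd_of_dvd_pow hdvd)
  exact this ▸ h1

lemma root_count_le {q : ℕ} (hq : 2 ≤ q) (u c : F) :
    (Finset.univ.filter (fun β : F => β ^ q + u * β = c)).card ≤ q := by
  set P : Polynomial F := Polynomial.X ^ q + Polynomial.C u * Polynomial.X - Polynomial.C c
    with hP
  have hcoeff : P.coeff q = 1 := by
    rw [hP]
    simp only [Polynomial.coeff_sub, Polynomial.coeff_add, Polynomial.coeff_X_pow,
      Polynomial.coeff_C_mul, Polynomial.coeff_X, Polynomial.coeff_C]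
    rw [if_pos trivial, if_neg (by omega : ¬ (1 = q)), if_neg (by omega : ¬ (q = 0))]
    ring
  have hP0 : P ≠ 0 := fun h => by simp [h] at hcoeff
  have hdeg : P.natDegree ≤ q := by
    rw [hP]
    refine le_trans (Polynomial.natDegree_sub_le _ _) ?_
    simp only [Polynomial.natDegree_X_pow, Polynomial.natDegree_C]
    refine max_le (le_trans (Polynomial.natDegree_add_le _ _) ?_) (by omega)
    simp only [Polynomial.natDegree_X_pow]
    refine max_le le_rfl (le_trans (Polynomial.natDegree_mul_le) ?_)
    simp only [Polynomial.natDegree_C, Polynomial.natDegree_X]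
    omega
  have hsub : Finset.univ.filter (fun β : F => β ^ q + u * β = c) ⊆ P.roots.toFinset := by
    intro β hβ
    rw [Finset.mem_filter] at hβ
    rw [Multiset.mem_toFinset, Polynomial.mem_roots hP0]
    simp only [Polynomial.IsRoot, hP, Polynomial.eval_sub, Polynomial.eval_add,
      Polynomial.eval_pow, Polynomial.eval_X, Polynomial.eval_C, Polynomial.eval_mul]
    rw [hβ.2]; ring
  refine le_trans (Finset.card_le_card hsub) (le_trans ?_ hdeg)
  refine le_trans (Multiset.toFinset_card_le _) ?_
  exact_mod_cast Polynomial.card_roots' P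

lemma fiber_count {p n q : ℕ} (hp : p.Prime) (hn : 0 < n) (hq : q = p ^ n)
    (hF : Fintype.card F = q ^ 2) (α : F) :
    (Finset.univ.filter (fun β : F => β ^ q + β = α ^ (q+1))).card = q := by
  haveI := charp_of_card (F := F) hp hn hq hF
  haveI : Fact p.Prime := ⟨hp⟩
  have hq2 : 2 ≤ q := by
    rw [hq]
    calc 2 ≤ p := hp.two_le
    _ ≤ p ^ n := Nat.le_self_pow (by omega) p
  have hfrob : ∀ a b : F, (a + b) ^ q = a ^ q + b ^ q := by
    intro a b; rw [hq]; exact add_pow_char_pow a b p n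
  have hpowcard : ∀ β : F, (β ^ q) ^ q = β := by
    intro β
    rw [← pow_mul, ← pow_two]
    rw [← hF]
    exact FiniteField.pow_card β
  set Tm := fun β : F => β ^ q + β with hTm
  set Kf := Finset.univ.filter (fun β : F => β ^ q + β = 0) with hKf
  set Rng := Finset.image Tm Finset.univ with hRng
  have hfib : ∀ c ∈ Rng, (Finset.univ.filter (fun β : F => β ^ q + β = c)).card = Kf.card := by
    intro c hc
    obtain ⟨β₀, -, hβ₀pre⟩ := Finset.mem_image.mp hc
    have hβ₀ : β₀ ^ q + β₀ = c := hβ₀pre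
    apply Finset.card_bij (fun x _ => x - β₀)
    · intro x hx
      rw [Finset.mem_filter] at hx
      rw [hKf, Finset.mem_filter]
      refine ⟨Finset.mem_univ _, ?_⟩
      have hx2 : x ^ q = (x - β₀) ^ q + β₀ ^ q := by
        rw [← hfrob]; ring_nf
      have hc2 : β₀ ^ q + β₀ = c := hβ₀
      have hc3 : x ^ q + x = c := hx.2
      have : (x - β₀) ^ q + (x - β₀) = (x ^ q + x) - (β₀ ^ q + β₀) := by
        rw [hx2]; ring
      rw [this, hc2, hc3, sub_self]
    · intro x hx y hy hxy
      exact sub_left_injective hxy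
    · intro k hk
      rw [hKf, Finset.mem_filter] at hk
      refine ⟨k + β₀, ?_, by ring⟩
      rw [Finset.mem_filter]
      refine ⟨Finset.mem_univ _, ?_⟩
      rw [hfrob]
      have : k ^ q + β₀ ^ q + (k + β₀) = (k ^ q + k) + (β₀ ^ q + β₀) := by ring
      rw [this, hk.2, hβ₀, zero_add]
  have hcount : q ^ 2 = Rng.card * Kf.card := by
    have h1 := Finset.card_eq_sum_card_fiberwise
      (f := Tm) (s := Finset.univ) (t := Rng)
      (fun x _ => Finset.mem_image_of_mem Tm (Finset.mem_univ x))
    rw [Finset.card_univ, hF] at h1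
    rw [h1]
    rw [Finset.sum_congr rfl (fun c hc => by
      rw [show Finset.univ.filter (fun x => Tm x = c)
        = Finset.univ.filter (fun β : F => β ^ q + β = c) from rfl, hfib c hc])]
    rw [Finset.sum_const, smul_eq_mul]
  have hKfle : Kf.card ≤ q := by
    have := root_count_le (F := F) hq2 1 0
    simpa [one_mul] using this
  have hfixle : (Finset.univ.filter (fun x : F => x ^ q = x)).card ≤ q := by
    have := root_count_le (F := F) hq2 (-1) 0
    refine le_trans (le_of_eq (congrArg Finset.card ?_)) this
    apply Finset.filter_congr
    intro x _
    constructor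
    · intro h; rw [h]; ring
    · intro h; have : x ^ q + -1 * x + x = 0 + x := by rw [h]
      simpa using this
  have hRngfix : Rng ⊆ Finset.univ.filter (fun x : F => x ^ q = x) := by
    intro x hx
    obtain ⟨β, -, hβ⟩ := Finset.mem_image.mp hx
    rw [Finset.mem_filter]
    refine ⟨Finset.mem_univ _, ?_⟩
    rw [← hβ]
    show (β ^ q + β) ^ q = β ^ q + β
    rw [hfrob, hpowcard]; ring
  have hRngle : Rng.card ≤ q := le_trans (Finset.card_le_card hRngfix) hfixle
  have hq0 : 0 < q := by omega
  have hKfq : Kf.card = q ∧ Rng.card = q := by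
    constructor <;> nlinarith [hcount, hKfle, hRngle]
  have hRngeq : Rng = Finset.univ.filter (fun x : F => x ^ q = x) := by
    apply Finset.eq_of_subset_of_card_le hRngfix
    rw [hKfq.2]; exact hfixle
  have hαfix : α ^ (q+1) ∈ Rng := by
    rw [hRngeq, Finset.mem_filter]
    refine ⟨Finset.mem_univ _, ?_⟩
    have h1 : (α ^ (q+1)) ^ q = (α ^ q) ^ q * α ^ q := by
      rw [← pow_mul, ← pow_mul, ← pow_add]; ring_nf
    rw [h1, hpowcard, ← pow_succ']
  rw [hfib _ hαfix, hKfq.1]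

lemma curve_card {p n q : ℕ} (hp : p.Prime) (hn : 0 < n) (hq : q = p ^ n)
    (hF : Fintype.card F = q ^ 2) :
    (Finset.univ.filter (fun P : F × F => P.2 ^ q + P.2 = P.1 ^ (q+1))).card = q ^ 3 := by
  have h1 := Finset.card_eq_sum_card_fiberwise
    (f := Prod.fst) (s := Finset.univ.filter (fun P : F × F => P.2 ^ q + P.2 = P.1 ^ (q+1)))
    (t := Finset.univ) (fun x _ => Finset.mem_univ _)
  rw [h1]
  have h2 : ∀ α : F, ((Finset.univ.filter
      (fun P : F × F => P.2 ^ q + P.2 = P.1 ^ (q+1))).filter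
      (fun P => P.1 = α)).card = q := by
    intro α
    refine Eq.trans ?_ (fiber_count (F := F) hp hn hq hF α)
    apply Finset.card_bij (fun P _ => P.2)
    · intro P hP
      simp only [Finset.mem_filter, Finset.mem_univ, true_and] at hP ⊢
      rw [← hP.2]; exact hP.1
    · intro P hP Q hQ hPQ
      simp only [Finset.mem_filter] at hP hQ
      exact Prod.ext (hP.2.trans hQ.2.symm) hPQ
    · intro β hβ
      simp only [Finset.mem_filter, Finset.mem_univ, true_and] at hβ
      exact ⟨(α, β), Finset.mem_filter.mpr ⟨Finset.mem_filter.mpr ⟨Finset.mem_univ _, hβ⟩, rfl⟩, rfl⟩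
  rw [Finset.sum_congr rfl (fun α _ => h2 α), Finset.sum_const, smul_eq_mul,
    Finset.card_univ, hF]
  ring

end Curve

section Exists
variable [Fintype F] [DecidableEq F]

lemma e2_injective {i j i' j' : ℕ} (h : e2 i j = e2 i' j') : i = i' ∧ j = j' := by
  constructor
  · have := DFunLike.congr_fun h 0; simpa using this
  · have := DFunLike.congr_fun h 1; simpa using this

lemma exists_vanishing {q : ℕ} (hq : 2 ≤ q) (E' : Finset (F × F)) :
    ∃ μ : MvPolynomial (Fin 2) F, μ ≠ 0 ∧ (∀ d ∈ μ.support, d 1 ≤ q - 1) ∧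
      (∀ d ∈ μ.support, W q d ≤ E'.card + q * (q-1) / 2) ∧
      (∀ P ∈ E', eval ![P.1, P.2] μ = 0) := by
  classical
  set g := q * (q-1) / 2 with hg
  set D := E'.card + g with hD
  set wt : ℕ × ℕ → ℕ := fun ij => q * ij.1 + (q+1) * ij.2 with hwt
  set S : Finset (ℕ × ℕ) :=
    ((Finset.range (D+1)) ×ˢ (Finset.range q)).filter (fun ij => wt ij ≤ D) with hS
  -- cardinality of S
  have hgood : S.image wt = (Finset.range (D+1)).filter (fun w => w % q ≤ w / q) := by
    apply Finset.ext
    intro w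
    constructor
    · intro hw
      obtain ⟨ij, hij, hwij⟩ := Finset.mem_image.mp hw
      rw [hS, Finset.mem_filter, Finset.mem_product, Finset.mem_range, Finset.mem_range] at hij
      obtain ⟨⟨hi, hj⟩, hwtle⟩ := hij
      rw [Finset.mem_filter, Finset.mem_range]
      have hwd : w = ij.2 + (ij.1 + ij.2) * q := by rw [← hwij, hwt]; ring
      have hmod : w % q = ij.2 := by
        rw [hwd, Nat.add_mul_mod_self_right, Nat.mod_eq_of_lt hj]
      have hdiv : w / q = ij.1 + ij.2 := by
        rw [hwd, Nat.add_mul_div_right _ _ (by omega : 0 < q), Nat.div_eq_of_lt hj, zero_add]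
      refine ⟨by omega, by omega⟩
    · intro hw
      rw [Finset.mem_filter, Finset.mem_range] at hw
      obtain ⟨hwD, hwmod⟩ := hw
      have hmq : w % q < q := Nat.mod_lt _ (by omega)
      obtain ⟨t, ht⟩ : ∃ t, w / q = w % q + t := ⟨w / q - w % q, by omega⟩
      have hdm : q * (w / q) + w % q = w := Nat.div_add_mod w q
      have hit : w / q - w % q = t := by omega
      have hwle : w / q ≤ w := Nat.div_le_self w q
      have hwt_eq : wt (w / q - w % q, w % q) = w := by
        show q * (w / q - w % q) + (q+1) * (w % q) = w
        rw [hit]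
        have hw2 : q * (w % q + t) + w % q = w := by rw [← ht]; exact hdm
        ring_nf
        ring_nf at hw2
        omega
      refine Finset.mem_image.mpr ⟨(w / q - w % q, w % q), ?_, hwt_eq⟩
      rw [hS, Finset.mem_filter, Finset.mem_product, Finset.mem_range, Finset.mem_range]
      exact ⟨⟨by omega, hmq⟩, by rw [hwt_eq]; omega⟩
  have hScard : E'.card < S.card := by
    have h1 : (S.image wt).card ≤ S.card := Finset.card_image_le
    rw [hgood] at h1
    -- count of bad w's
    set bad := (Finset.range (D+1)).filter (fun w => w / q < w % q) with hbad
    have hbadle : bad.card ≤ g := by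
      set T := ((Finset.range q) ×ˢ (Finset.range q)).filter (fun t : ℕ × ℕ => t.2 < t.1)
        with hT
      have hinj : ∀ w ∈ bad, ∀ w' ∈ bad,
          ((fun w => (w % q, w / q)) w = (fun w => (w % q, w / q)) w') → w = w' := by
        intro w hw w' hw' heq
        have h1 := congrArg Prod.fst heq
        have h2 := congrArg Prod.snd heq
        simp only at h1 h2
        have e1 : q * (w / q) + w % q = w := Nat.div_add_mod w q
        have e2 : q * (w' / q) + w' % q = w' := Nat.div_add_mod w' q
        rw [h1, h2] at e1
        omega
      have hmaps : ∀ w ∈ bad, (w % q, w / q) ∈ T := by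
        intro w hw
        rw [hbad, Finset.mem_filter] at hw
        have hmq : w % q < q := Nat.mod_lt _ (by omega)
        rw [hT, Finset.mem_filter, Finset.mem_product, Finset.mem_range, Finset.mem_range]
        exact ⟨⟨show w % q < q from hmq, show w / q < q by omega⟩,
          show w / q < w % q from hw.2⟩
      have hcardle : bad.card ≤ T.card := Finset.card_le_card_of_injOn _ hmaps
        (fun w hw w' hw' heq => hinj w hw w' hw' heq)
      refine le_trans hcardle ?_
      -- card of T
      have hTcard : T.card * 2 = q * (q - 1) := by
        have h1 := Finset.card_eq_sum_card_fiberwise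
          (f := Prod.fst) (s := T) (t := Finset.range q) (by
            intro x hx
            rw [Finset.mem_coe] at hx ⊢
            rw [hT, Finset.mem_filter, Finset.mem_product] at hx
            exact hx.1.1)
        have h2 : ∀ t1 ∈ Finset.range q, (T.filter (fun t => t.1 = t1)).card = t1 := by
          intro t1 ht1
          rw [Finset.mem_range] at ht1
          have : T.filter (fun t => t.1 = t1) = ({t1} : Finset ℕ) ×ˢ (Finset.range t1) := by
            apply Finset.ext
            rintro ⟨x1, x2⟩
            rw [Finset.mem_filter, hT, Finset.mem_filter, Finset.mem_product,
              Finset.mem_product, Finset.mem_range, Finset.mem_range,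
              Finset.mem_singleton, Finset.mem_range]
            constructor
            · rintro ⟨⟨⟨ha, hb⟩, hc⟩, hd⟩
              exact ⟨hd, by omega⟩
            · rintro ⟨ha, hb⟩
              subst ha
              exact ⟨⟨⟨by omega, by omega⟩, hb⟩, rfl⟩
          rw [this, Finset.card_product, Finset.card_singleton, Finset.card_range, one_mul]
        rw [h1, Finset.sum_congr rfl h2]
        have := Finset.sum_range_id_mul_two q
        rw [this]
      omega
    have hgoodcard : ((Finset.range (D+1)).filter (fun w => w % q ≤ w / q)).card
        = (D + 1) - bad.card := by
      have := Finset.card_filter_add_card_filter_not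
        (s := Finset.range (D+1)) (p := fun w => w % q ≤ w / q)
      rw [Finset.card_range] at this
      have hbadeq : (Finset.range (D+1)).filter (fun w => ¬ (w % q ≤ w / q)) = bad := by
        rw [hbad]
        apply Finset.filter_congr
        intro w _
        constructor
        · intro hx; omega
        · intro hx; omega
      rw [hbadeq] at this
      omega
    omega
  -- linear algebra: find a nonzero kernel element
  set Φ : ((↥S → F)) →ₗ[F] (↥E' → F) :=
    { toFun := fun v => fun Pp => ∑ ij : ↥S,
        v ij * ((Pp : F × F).1 ^ (ij : ℕ × ℕ).1 * (Pp : F × F).2 ^ (ij : ℕ × ℕ).2)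
      map_add' := by
        intro v w; funext Pp
        simp only [Pi.add_apply, add_mul, Finset.sum_add_distrib]
      map_smul' := by
        intro c v; funext Pp
        simp only [Pi.smul_apply, smul_eq_mul, RingHom.id_apply, Finset.mul_sum, mul_assoc] }
    with hΦ
  have hninj : ¬ Function.Injective Φ := by
    intro hinj
    have hle := LinearMap.finrank_le_finrank_of_injective hinj
    rw [Module.finrank_fintype_fun_eq_card, Module.finrank_fintype_fun_eq_card,
      Fintype.card_coe, Fintype.card_coe] at hle
    omega
  obtain ⟨v, w, hvw, hne⟩ := Function.not_injective_iff.mp hninj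
  set u := v - w with hu
  have hu0 : u ≠ 0 := sub_ne_zero.mpr hne
  have hΦu : Φ u = 0 := by rw [hu, map_sub, hvw, sub_self]
  set μ : MvPolynomial (Fin 2) F :=
    ∑ ij : ↥S, monomial (e2 (ij : ℕ × ℕ).1 (ij : ℕ × ℕ).2) (u ij) with hμdef
  have hcoeff : ∀ ij : ↥S, μ.coeff (e2 (ij : ℕ × ℕ).1 (ij : ℕ × ℕ).2) = u ij := by
    intro ij
    rw [hμdef, coeff_sum]
    simp only [coeff_monomial]
    rw [Finset.sum_eq_single ij]
    · rw [if_pos rfl]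
    · intro ij' _ hne'
      rw [if_neg]
      intro heq
      obtain ⟨h1, h2⟩ := e2_injective heq
      exact hne' (Subtype.ext (Prod.ext h1 h2))
    · intro habs
      exact absurd (Finset.mem_univ _) habs
  have hsupp : ∀ d ∈ μ.support, ∃ ij : ↥S, d = e2 (ij : ℕ × ℕ).1 (ij : ℕ × ℕ).2 := by
    intro d hd
    rw [mem_support_iff] at hd
    by_contra hcon
    push_neg at hcon
    apply hd
    rw [hμdef, coeff_sum]
    apply Finset.sum_eq_zero
    intro ij _
    rw [coeff_monomial, if_neg (fun heq => (hcon ij) (heq.symm))]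
  refine ⟨μ, ?_, ?_, ?_, ?_⟩
  · intro h0
    obtain ⟨ij, hij⟩ := Function.ne_iff.mp hu0
    apply hij
    rw [← hcoeff ij, h0, coeff_zero]
    rfl
  · intro d hd
    obtain ⟨ij, rfl⟩ := hsupp d hd
    have hmem := Finset.mem_filter.mp ij.2
    have hj := (Finset.mem_range.mp (Finset.mem_product.mp hmem.1).2)
    simp only [e2_app1]
    omega
  · intro d hd
    obtain ⟨ij, rfl⟩ := hsupp d hd
    have hmem := Finset.mem_filter.mp ij.2
    rw [W_e2]
    exact hmem.2
  · intro P hP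
    have h0 := congrFun hΦu ⟨P, hP⟩
    rw [hΦ] at h0
    simp only [LinearMap.coe_mk, AddHom.coe_mk, Pi.zero_apply] at h0
    rw [hμdef, map_sum]
    rw [← h0]
    apply Finset.sum_congr rfl
    intro ij _
    rw [eval_monomial₂, e2_app0, e2_app1]
    ring

end Exists

section MulSupp

lemma supp_mul_W (p r : MvPolynomial (Fin 2) F) {d : Fin 2 →₀ ℕ}
    (hd : d ∈ (p * r).support) : ∃ b ∈ p.support, ∃ c ∈ r.support, d = b + c := by
  classical
  have := MvPolynomial.support_mul p r hd
  rw [Finset.mem_add] at this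
  obtain ⟨b, hb, c, hc, hbc⟩ := this
  exact ⟨b, hb, c, hc, hbc.symm⟩

end MulSupp

end
end HermAux

open HermAux

/-- Uniqueness of the error locator found by solving the (first) key equation, when the
number of errors is below `(q³ - m - g)/2`.  Here `F` is the field with `q²` elements,
`q = p^e`, the Hermitian curve is `β^q + β = α^(q+1)` with genus `g = q(q-1)/2`, and
`deg_{q,q+1}` denotes the `(q, q+1)`-weighted degree.  `Λ` is the nonzero polynomial with
`y`-degree at most `q-1`, vanishing on the error set `E`, of minimal weighted degree and
with leading coefficient `1`.  Any solution `(λ, ψ)` of the key equation with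
`deg_{q,q+1} λ ≤ deg_{q,q+1} Λ` and `deg_{q,q+1} ψ ≤ deg_{q,q+1} λ + m` satisfies
`λ = γ·Λ` for a nonzero constant `γ`. -/
theorem stmt_10 (p e : ℕ) (hp : p.Prime) (he : 0 < e) (q : ℕ) (hq : q = p ^ e)
    (F : Type) [Field F] [Fintype F] (hF : Fintype.card F = q ^ 2)
    (m : ℕ) (f : MvPolynomial (Fin 2) F)
    (hfy : MvPolynomial.degreeOf 1 f ≤ q - 1)
    (hfdeg : MvPolynomial.weightedTotalDegree ![q, q + 1] f ≤ m)
    (r : F × F → F) (E : Set (F × F))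
    (hE : E = {P : F × F | P.2 ^ q + P.2 = P.1 ^ (q + 1) ∧
      r P ≠ MvPolynomial.eval ![P.1, P.2] f})
    (hErrs : 2 * E.ncard + m + q * (q - 1) / 2 < q ^ 3)
    (R : MvPolynomial (Fin 2) F)
    (hR : ∀ α β : F, β ^ q + β = α ^ (q + 1) →
      MvPolynomial.eval ![α, β] R = r (α, β))
    (Λ : MvPolynomial (Fin 2) F) (hΛ0 : Λ ≠ 0)
    (hΛy : MvPolynomial.degreeOf 1 Λ ≤ q - 1)
    (hΛvan : ∀ P ∈ E, MvPolynomial.eval ![P.1, P.2] Λ = 0)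
    (hΛmin : ∀ μ : MvPolynomial (Fin 2) F, μ ≠ 0 →
      MvPolynomial.degreeOf 1 μ ≤ q - 1 →
      (∀ P ∈ E, MvPolynomial.eval ![P.1, P.2] μ = 0) →
      MvPolynomial.weightedTotalDegree ![q, q + 1] Λ ≤
        MvPolynomial.weightedTotalDegree ![q, q + 1] μ)
    (hΛlc : ∀ d ∈ Λ.support, q * d 0 + (q + 1) * d 1 =
      MvPolynomial.weightedTotalDegree ![q, q + 1] Λ → Λ.coeff d = 1)
    (lam ψ : MvPolynomial (Fin 2) F) (hlam0 : lam ≠ 0)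
    (hlamy : MvPolynomial.degreeOf 1 lam ≤ q - 1)
    (hψy : MvPolynomial.degreeOf 1 ψ ≤ q - 1)
    (hlamdeg : MvPolynomial.weightedTotalDegree ![q, q + 1] lam ≤
      MvPolynomial.weightedTotalDegree ![q, q + 1] Λ)
    (hψdeg : MvPolynomial.weightedTotalDegree ![q, q + 1] ψ ≤
      MvPolynomial.weightedTotalDegree ![q, q + 1] lam + m)
    (hkey : lam * R - ψ ∈ Ideal.span {(X 0 : MvPolynomial (Fin 2) F) ^ (q ^ 2) - X 0,
      (X 1 : MvPolynomial (Fin 2) F) ^ q + X 1 - (X 0) ^ (q + 1)}) :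
    ∃ γ : F, γ ≠ 0 ∧ lam = MvPolynomial.C γ * Λ := by
  classical
  have hq2 : 2 ≤ q := by
    rw [hq]
    calc 2 ≤ p := hp.two_le
    _ ≤ p ^ e := Nat.le_self_pow (by omega) p
  have hwdeg : ∀ h : MvPolynomial (Fin 2) F,
      weightedTotalDegree ![q, q+1] h = h.support.sup (W q) := wdeg_eq q
  -- E as a Finset
  set EF : Finset (F × F) := Finset.univ.filter (fun P : F × F =>
    P.2 ^ q + P.2 = P.1 ^ (q+1) ∧ r P ≠ eval ![P.1, P.2] f) with hEF
  have hEset : E = ↑EF := by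
    rw [hE, hEF]; ext P; simp
  have hEncard : E.ncard = EF.card := by rw [hEset]; exact Set.ncard_coe_finset EF
  -- bound for the degree of Λ
  obtain ⟨μE, hμE0, hμEy, hμEW, hμEvan⟩ := exists_vanishing (F := F) hq2 EF
  have hΛle : Λ.support.sup (W q) ≤ EF.card + q * (q-1) / 2 := by
    have h1 := hΛmin μE hμE0 (degreeOf_le_iff.mpr hμEy) (by
      intro P hP
      apply hμEvan
      rw [hEset] at hP
      exact hP)
    rw [hwdeg, hwdeg] at h1
    exact le_trans h1 (Finset.sup_le hμEW)
  -- values of the key equation on the curve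
  have hcurve_val : ∀ α β : F, β ^ q + β = α ^ (q+1) →
      eval ![α, β] lam * r (α, β) = eval ![α, β] ψ := by
    intro α β hcv
    obtain ⟨u1, u2, hkeq⟩ := Ideal.mem_span_pair.mp hkey
    have h1 : eval ![α, β] (lam * R - ψ) = 0 := by
      rw [← hkeq, map_add, map_mul, map_mul]
      have hx : eval ![α, β] ((X 0 : MvPolynomial (Fin 2) F) ^ (q ^ 2) - X 0) = 0 := by
        simp only [map_sub, map_pow, eval_X, Matrix.cons_val_zero]
        rw [← hF, FiniteField.pow_card, sub_self]
      have hy2 : eval ![α, β] ((X 1 : MvPolynomial (Fin 2) F) ^ q + X 1 - X 0 ^ (q+1)) = 0 := by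
        simp only [map_sub, map_add, map_pow, eval_X, Matrix.cons_val_zero,
          Matrix.cons_val_one, Matrix.head_cons]
        rw [hcv, sub_self]
      rw [hx, hy2]
      ring
    rw [map_sub, map_mul, sub_eq_zero] at h1
    rw [hR α β hcv] at h1
    exact h1
  -- the reduced interpolation error
  set h₁ := lam * f - ψ with hh₁
  set G := R1 q h₁ with hG
  have hGval : ∀ α β : F, β ^ q + β = α ^ (q+1) →
      eval ![α, β] G = eval ![α, β] lam * eval ![α, β] f - eval ![α, β] ψ := by
    intro α β hcv
    have h2 := congrArg (eval ![α, β]) (R1_sub q h₁)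
    rw [map_sub, map_mul] at h2
    have hFy0 : eval ![α, β] (Fy q (F := F)) = 0 := by
      rw [Fy]
      simp only [map_sub, map_add, map_pow, eval_X, Matrix.cons_val_zero,
        Matrix.cons_val_one, Matrix.head_cons]
      rw [hcv, sub_self]
    rw [hFy0, zero_mul, sub_eq_zero] at h2
    rw [← h2, hh₁, map_sub, map_mul]
  have hh₁y : ∀ d ∈ h₁.support, d 1 ≤ 2*q - 2 := by
    intro d hd
    rw [hh₁] at hd
    rcases Finset.mem_union.mp (MvPolynomial.support_sub _ _ _ hd) with h1 | h2
    · obtain ⟨b, hb, c, hc, rfl⟩ := supp_mul_W lam f h1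
      have hb1 := degreeOf_le_iff.mp hlamy b hb
      have hc1 := degreeOf_le_iff.mp hfy c hc
      have : (b + c) 1 = b 1 + c 1 := rfl
      omega
    · have := degreeOf_le_iff.mp hψy d h2
      omega
  have hGy : ∀ d ∈ G.support, d 1 ≤ q - 1 := fun d hd => degY_R1 q hq2 h₁ hh₁y hd
  have hGW : ∀ d ∈ G.support, W q d ≤ lam.support.sup (W q) + m := by
    intro d hd
    refine le_trans (wdeg_R1_le q (by omega) h₁ hd) (Finset.sup_le ?_)
    intro dd hdd
    rw [hh₁] at hdd
    rcases Finset.mem_union.mp (MvPolynomial.support_sub _ _ _ hdd) with h1 | h2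
    · obtain ⟨b, hb, c, hc, rfl⟩ := supp_mul_W lam f h1
      rw [W_add]
      have hb1 : W q b ≤ lam.support.sup (W q) := Finset.le_sup hb
      have hc1 : W q c ≤ m := by
        have := le_weightedTotalDegree (![q, q+1]) hc
        rw [weight_eq] at this
        exact le_trans this hfdeg
      omega
    · have h3 : W q dd ≤ weightedTotalDegree ![q, q+1] ψ := by
        have := le_weightedTotalDegree (![q, q+1]) h2
        rwa [weight_eq] at this
      refine le_trans h3 (le_trans hψdeg ?_)
      rw [hwdeg]
  -- lam vanishes on E
  have hlam_vanish : ∀ P ∈ E, eval ![P.1, P.2] lam = 0 := by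
    have hG0 : G = 0 := by
      by_contra hG0
      have hzb := zero_bound (F := F) hq2 hG0 hGy
      set CF : Finset (F × F) := Finset.univ.filter
        (fun P : F × F => P.2 ^ q + P.2 = P.1 ^ (q+1)) with hCF
      have hsubset : CF \ EF ⊆ Finset.univ.filter (fun P : F × F =>
          P.2 ^ q + P.2 = P.1 ^ (q+1) ∧ eval ![P.1, P.2] G = 0) := by
        intro P hP
        rw [Finset.mem_sdiff, hCF, Finset.mem_filter] at hP
        obtain ⟨⟨-, hcv⟩, hnE⟩ := hP
        rw [Finset.mem_filter]
        refine ⟨Finset.mem_univ _, hcv, ?_⟩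
        have hrP : r P = eval ![P.1, P.2] f := by
          by_contra hrf
          exact hnE (by rw [hEF, Finset.mem_filter]; exact ⟨Finset.mem_univ _, hcv, hrf⟩)
        rw [hGval P.1 P.2 hcv]
        have := hcurve_val P.1 P.2 hcv
        rw [show (P.1, P.2) = P from rfl, hrP] at this
        rw [← this]
        ring
      have hCFcard : CF.card = q ^ 3 := curve_card (F := F) hp he hq hF
      have hEsub : EF ⊆ CF := by
        intro P hP
        rw [hEF, Finset.mem_filter] at hP
        rw [hCF, Finset.mem_filter]
        exact ⟨Finset.mem_univ _, hP.2.1⟩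
      have hEle : EF.card ≤ q ^ 3 := hCFcard ▸ Finset.card_le_card hEsub
      have hsd : (CF \ EF).card = q ^ 3 - EF.card := by
        rw [Finset.card_sdiff_of_subset hEsub, hCFcard]
      have hchain : q ^ 3 - EF.card ≤ lam.support.sup (W q) + m := by
        rw [← hsd]
        refine le_trans (Finset.card_le_card hsubset) (le_trans hzb ?_)
        exact Finset.sup_le hGW
      have hlamle : lam.support.sup (W q) ≤ EF.card + q * (q-1) / 2 := by
        rw [hwdeg, hwdeg] at hlamdeg
        exact le_trans hlamdeg hΛle
      rw [hEncard] at hErrs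
      omega
    intro P hP
    rw [hE] at hP
    obtain ⟨hcv, hrf⟩ := hP
    have hv := hGval P.1 P.2 hcv
    rw [hG0, map_zero] at hv
    have hk2 := hcurve_val P.1 P.2 hcv
    rw [show (P.1, P.2) = P from rfl] at hk2
    have hzero : eval ![P.1, P.2] lam * (eval ![P.1, P.2] f - r P) = 0 := by
      rw [mul_sub, hk2]
      exact hv.symm
    rcases mul_eq_zero.mp hzero with h | h
    · exact h
    · exact absurd (sub_eq_zero.mp h) (fun hh => hrf hh.symm)
  -- minimality forces equality of weighted degrees
  have hlamW_ge := hΛmin lam hlam0 hlamy hlam_vanish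
  rw [hwdeg, hwdeg] at hlamW_ge hlamdeg
  have hWeq : lam.support.sup (W q) = Λ.support.sup (W q) := le_antisymm hlamdeg hlamW_ge
  obtain ⟨dΛ, hdΛ, hWdΛ⟩ := Finset.exists_mem_eq_sup Λ.support
    (MvPolynomial.support_nonempty.mpr hΛ0) (W q)
  obtain ⟨dl, hdl, hWdl⟩ := Finset.exists_mem_eq_sup lam.support
    (MvPolynomial.support_nonempty.mpr hlam0) (W q)
  have hWdldΛ : W q dl = W q dΛ := by rw [← hWdl, ← hWdΛ, hWeq]
  have hdly : dl 1 < q := by have := degreeOf_le_iff.mp hlamy dl hdl; omega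
  have hdΛy : dΛ 1 < q := by have := degreeOf_le_iff.mp hΛy dΛ hdΛ; omega
  have hdeq : dl = dΛ := by
    obtain ⟨h0, h1⟩ := e2_inj hq2 hdly hdΛy hWdldΛ
    rw [← e2_eta dl, h0, h1, e2_eta]
  have hΛc : Λ.coeff dΛ = 1 := by
    apply hΛlc dΛ hdΛ
    rw [hwdeg]
    exact hWdΛ.symm
  set γ := lam.coeff dΛ with hγ
  have hγ0 : γ ≠ 0 := by
    rw [hγ]
    exact mem_support_iff.mp (hdeq ▸ hdl)
  refine ⟨γ, hγ0, ?_⟩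
  by_contra hne
  set μ2 := lam - C γ * Λ with hμ2
  have hμ2ne : μ2 ≠ 0 := sub_ne_zero.mpr hne
  have hsupp2 : ∀ d ∈ μ2.support, d ∈ lam.support ∪ Λ.support := by
    intro d hd
    rcases Finset.mem_union.mp (MvPolynomial.support_sub _ _ _ hd) with h | h
    · exact Finset.mem_union_left _ h
    · refine Finset.mem_union_right _ ?_
      rw [mem_support_iff] at h ⊢
      intro hc
      exact h (by rw [coeff_C_mul, hc, mul_zero])
  have hμ2y : MvPolynomial.degreeOf 1 μ2 ≤ q - 1 := by
    rw [degreeOf_le_iff]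
    intro d hd
    rcases Finset.mem_union.mp (hsupp2 d hd) with h | h
    · exact degreeOf_le_iff.mp hlamy d h
    · exact degreeOf_le_iff.mp hΛy d h
  have hμ2van : ∀ P ∈ E, eval ![P.1, P.2] μ2 = 0 := by
    intro P hP
    rw [hμ2, map_sub, map_mul, eval_C, hlam_vanish P hP, hΛvan P hP]
    ring
  have hμ2coeff : μ2.coeff dΛ = 0 := by
    rw [hμ2, coeff_sub, coeff_C_mul, hΛc, mul_one]
    exact sub_self γ
  have hμ2lt : ∀ d ∈ μ2.support, W q d < W q dΛ := by
    intro d hd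
    have hdy : d 1 < q := by
      have := degreeOf_le_iff.mp hμ2y d hd; omega
    have hdle : W q d ≤ W q dΛ := by
      rcases Finset.mem_union.mp (hsupp2 d hd) with h | h
      · rw [← hWdldΛ, ← hWdl]; exact Finset.le_sup h
      · rw [← hWdΛ]; exact Finset.le_sup h
    rcases lt_or_eq_of_le hdle with h | h
    · exact h
    · exfalso
      obtain ⟨h0, h1⟩ := e2_inj hq2 hdy hdΛy h
      have : d = dΛ := by rw [← e2_eta d, h0, h1, e2_eta]
      rw [this] at hd
      exact (mem_support_iff.mp hd) hμ2coeff
  have hmin2 := hΛmin μ2 hμ2ne hμ2y hμ2van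
  rw [hwdeg, hwdeg] at hmin2
  obtain ⟨d2, hd2, hWd2⟩ := Finset.exists_mem_eq_sup μ2.support
    (MvPolynomial.support_nonempty.mpr hμ2ne) (W q)
  have h1 : W q dΛ ≤ W q d2 := by rw [← hWd2, ← hWdΛ]; exact hmin2
  exact absurd (hμ2lt d2 hd2) (not_lt.mpr h1)
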